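/- Let M be a compact, connected Riemannian manifold without boundary and let (X_t)_t be a continuous flow on M with at most finitely many equilibrium points, with periodic points dense in M, transitive, and such that for every T > 0 the set of periodic orbits of period smaller than T consists of finitely many disjoint closed curves. Let (Y_s)_s be a continuous flow commuting with (X_t)_t. Then for every x ∈ M and every s ∈ ℝ, the point Y_s(x) belongs to the orbit {X_t(x) : t ∈ ℝ} of x under (X_t)_t. -/

import Mathlib

open Set Filter Topology Metric

noncomputable section

variable {M : Type*} [MetricSpace M]

/-- A (global, jointly continuous) flow on `M`. -/
def IsFlow (φ : ℝ → M → M) : Prop :=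
  Continuous (fun p : ℝ × M => φ p.1 p.2) ∧ (∀ x, φ 0 x = x) ∧
    ∀ s t x, φ (s + t) x = φ s (φ t x)

/-- Two flows commute: `Y_s ∘ X_t = X_t ∘ Y_s` for all `s, t`. -/
def FlowsCommute (φ ψ : ℝ → M → M) : Prop :=
  ∀ (s t : ℝ) (x : M), ψ s (φ t x) = φ t (ψ s x)

/-- The orbit of a point under a flow. -/
def flowOrbit (φ : ℝ → M → M) (p : M) : Set M := range fun t => φ t p

/-- An equilibrium point of a flow. -/
def IsEquilibrium (φ : ℝ → M → M) (p : M) : Prop := ∀ t, φ t p = p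

/-- A periodic (non-equilibrium) point of a flow. -/
def IsPeriodicPoint (φ : ℝ → M → M) (p : M) : Prop :=
  (∃ T > 0, φ T p = p) ∧ ¬ IsEquilibrium φ p

/-- The flow is (topologically) transitive: some point has dense forward orbit. -/
def IsTransitiveFlow (φ : ℝ → M → M) : Prop :=
  ∃ x : M, Dense {y | ∃ t : ℝ, 0 ≤ t ∧ φ t x = y}

/-- For every `T > 0`, the set of periodic orbits of period smaller than `T` consists of
finitely many (disjoint) closed curves, i.e. of finitely many periodic orbits. -/
def FinitelyManyShortPeriodicOrbits (φ : ℝ → M → M) : Prop :=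
  ∀ T : ℝ, 0 < T → ∃ F : Set M, F.Finite ∧
    ∀ p : M, IsPeriodicPoint φ p → (∃ s : ℝ, 0 < s ∧ s < T ∧ φ s p = p) →
      ∃ q ∈ F, flowOrbit φ p = flowOrbit φ q

section TheoremB

variable {φ ψ : ℝ → M → M}

lemma flow_cont_t (hφ : IsFlow φ) (x : M) : Continuous fun t => φ t x :=
  hφ.1.comp (continuous_id.prodMk continuous_const)

lemma flow_cont_x (hφ : IsFlow φ) (t : ℝ) : Continuous (φ t) :=
  hφ.1.comp (continuous_const.prodMk continuous_id)

lemma mem_flowOrbit_self (hφ : IsFlow φ) (x : M) : x ∈ flowOrbit φ x :=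
  ⟨0, hφ.2.1 x⟩

lemma flowOrbit_shift (hφ : IsFlow φ) (t : ℝ) (x : M) :
    flowOrbit φ (φ t x) = flowOrbit φ x := by
  ext z
  constructor
  · rintro ⟨u, rfl⟩
    refine ⟨u + t, ?_⟩
    show φ (u + t) x = φ u (φ t x)
    exact hφ.2.2 u t x
  · rintro ⟨u, rfl⟩
    refine ⟨u - t, ?_⟩
    show φ (u - t) (φ t x) = φ u x
    rw [← hφ.2.2, sub_add_cancel]

lemma flowOrbit_eq_of_mem (hφ : IsFlow φ) {x y : M} (h : y ∈ flowOrbit φ x) :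
    flowOrbit φ y = flowOrbit φ x := by
  obtain ⟨t, rfl⟩ := h
  exact flowOrbit_shift hφ t x

lemma flow_period_int (hφ : IsFlow φ) {T : ℝ} {x : M} (hT : φ T x = x) :
    ∀ k : ℤ, φ ((k : ℝ) * T) x = x := by
  have hneg : φ (-T) x = x := by
    conv_lhs => rw [← hT]
    rw [← hφ.2.2, neg_add_cancel, hφ.2.1]
  intro k
  induction k using Int.induction_on with
  | zero => simpa using hφ.2.1 x
  | succ n ih =>
    have : ((n : ℤ) + 1 : ℝ) * T = T + (n : ℝ) * T := by push_cast; ring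
    push_cast
    rw [show ((n : ℝ) + 1) * T = T + (n : ℝ) * T by ring, hφ.2.2]
    push_cast at ih
    rw [ih, hT]
  | pred n ih =>
    push_cast at ih ⊢
    rw [show (-(n : ℝ) - 1) * T = -(n : ℝ) * T + -T by ring, hφ.2.2, hneg]
    exact ih

lemma flow_sub_period (hφ : IsFlow φ) {T₀ : ℝ} {p : M}
    (hstab : ∀ k : ℤ, φ ((k : ℝ) * T₀) p = p) (t : ℝ) (k : ℤ) :
    φ (t - (k : ℝ) * T₀) p = φ t p := by
  have h1 : φ (t - (k : ℝ) * T₀) (φ ((k : ℝ) * T₀) p) = φ t p := by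
    rw [← hφ.2.2, sub_add_cancel]
  rwa [hstab k] at h1

lemma flowOrbit_eq_image (hφ : IsFlow φ) {T : ℝ} {x : M} (hT0 : 0 < T) (hT : φ T x = x) :
    flowOrbit φ x = (fun t => φ t x) '' Icc 0 T := by
  apply Subset.antisymm
  · rintro z ⟨t, rfl⟩
    refine ⟨t - (⌊t / T⌋ : ℝ) * T, ⟨Int.sub_floor_div_mul_nonneg t hT0,
      (Int.sub_floor_div_mul_lt t hT0).le⟩, ?_⟩
    exact flow_sub_period hφ (flow_period_int hφ hT) t ⌊t / T⌋
  · rintro z ⟨t, _, rfl⟩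
    exact ⟨t, rfl⟩

lemma flowOrbit_isCompact (hφ : IsFlow φ) {T : ℝ} {x : M} (hT0 : 0 < T) (hT : φ T x = x) :
    IsCompact (flowOrbit φ x) := by
  rw [flowOrbit_eq_image hφ hT0 hT]
  exact isCompact_Icc.image (flow_cont_t hφ x)

/-- Step 1: the commuting flow preserves each periodic orbit. -/
lemma psi_mem_orbit (hφ : IsFlow φ) (hψ : IsFlow ψ) (hcomm : FlowsCommute φ ψ)
    (h4 : FinitelyManyShortPeriodicOrbits φ) {p : M} (hp : IsPeriodicPoint φ p) :
    ∀ u : ℝ, ψ u p ∈ flowOrbit φ p := by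
  obtain ⟨⟨T, hT0, hT⟩, hpe⟩ := hp
  obtain ⟨F, hFfin, hF⟩ := h4 (T + 1) (by linarith)
  have hper : ∀ u : ℝ, φ T (ψ u p) = ψ u p := fun u => by rw [← hcomm, hT]
  have hinv : ∀ u : ℝ, ψ (-u) (ψ u p) = p := by
    intro u
    rw [← hψ.2.2, neg_add_cancel, hψ.2.1]
  have hne : ∀ u : ℝ, ¬ IsEquilibrium φ (ψ u p) := by
    intro u hEq
    apply hpe
    intro t
    calc φ t p = φ t (ψ (-u) (ψ u p)) := by rw [hinv]
      _ = ψ (-u) (φ t (ψ u p)) := (hcomm _ _ _).symm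
      _ = ψ (-u) (ψ u p) := by rw [hEq t]
      _ = p := hinv u
  have hPP : ∀ u : ℝ, IsPeriodicPoint φ (ψ u p) := fun u => ⟨⟨T, hT0, hper u⟩, hne u⟩
  have hcpt : ∀ u : ℝ, IsCompact (flowOrbit φ (ψ u p)) :=
    fun u => flowOrbit_isCompact hφ hT0 (hper u)
  set Rp := flowOrbit φ p with hRp
  have hRpc : IsCompact Rp := flowOrbit_isCompact hφ hT0 hT
  set F' := {q ∈ F | flowOrbit φ q ≠ Rp ∧ IsCompact (flowOrbit φ q)} with hF'
  set K := ⋃ q ∈ F', flowOrbit φ q with hK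
  have hKc : IsCompact K :=
    Set.Finite.isCompact_biUnion (hFfin.subset fun q hq => hq.1) fun q hq => hq.2.2
  have hdich : ∀ u : ℝ, ψ u p ∈ Rp ∨ ψ u p ∈ K := by
    intro u
    obtain ⟨q, hqF, hq⟩ := hF (ψ u p) (hPP u) ⟨T, hT0, by linarith, hper u⟩
    by_cases he : flowOrbit φ q = Rp
    · left
      have h1 := mem_flowOrbit_self hφ (ψ u p)
      rw [hq, he] at h1
      exact h1
    · right
      have hmem : ψ u p ∈ flowOrbit φ q := by
        rw [← hq]; exact mem_flowOrbit_self hφ _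
      have hqc : IsCompact (flowOrbit φ q) := by rw [← hq]; exact hcpt u
      exact mem_biUnion ⟨hqF, he, hqc⟩ hmem
  have hdisj : ∀ z ∈ K, z ∉ Rp := by
    intro z hz hzp
    obtain ⟨q, hq, hzq⟩ := mem_iUnion₂.mp hz
    exact hq.2.1 (by rw [← flowOrbit_eq_of_mem hφ hzq, flowOrbit_eq_of_mem hφ hzp])
  set V := {u : ℝ | ψ u p ∈ Rp} with hV
  have hcψ : Continuous fun u => ψ u p := flow_cont_t hψ p
  have hVclosed : IsClosed V := hRpc.isClosed.preimage hcψ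
  have hVopen : IsOpen V := by
    have hVeq : V = (fun u => ψ u p) ⁻¹' Kᶜ := by
      ext u
      simp only [hV, mem_setOf_eq, mem_preimage, mem_compl_iff]
      constructor
      · intro h hK'
        exact hdisj _ hK' h
      · intro h
        rcases hdich u with h' | h'
        · exact h'
        · exact absurd h' h
    rw [hVeq]
    exact (hKc.isClosed.isOpen_compl).preimage hcψ
  have hV0 : (0 : ℝ) ∈ V := by
    show ψ 0 p ∈ Rp
    rw [hψ.2.1]
    exact mem_flowOrbit_self hφ p
  have hVuniv : V = univ := IsClopen.eq_univ ⟨hVclosed, hVopen⟩ ⟨0, hV0⟩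
  intro u
  have : u ∈ V := hVuniv ▸ mem_univ u
  exact this

/-- Minimal period of a periodic point. -/
lemma exists_minimal_period (hφ : IsFlow φ) {p : M} (hp : IsPeriodicPoint φ p) :
    ∃ T₀ : ℝ, 0 < T₀ ∧ ∀ t : ℝ, φ t p = p ↔ ∃ k : ℤ, t = (k : ℝ) * T₀ := by
  obtain ⟨⟨T, hT0, hT⟩, hne⟩ := hp
  set S : Set ℝ := {t | φ t p = p} with hS
  have hSclosed : IsClosed S := isClosed_eq (flow_cont_t hφ p) continuous_const
  have hSint : ∀ t ∈ S, ∀ k : ℤ, (k : ℝ) * t ∈ S := fun t ht k => flow_period_int hφ ht k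
  set T₀ := sInf (S ∩ Ioi 0) with hT₀def
  have hne' : (S ∩ Ioi 0).Nonempty := ⟨T, hT, hT0⟩
  have hbdd : BddBelow (S ∩ Ioi 0) := ⟨0, fun t ht => le_of_lt ht.2⟩
  have hT₀0 : 0 ≤ T₀ := le_csInf hne' fun t ht => le_of_lt ht.2
  have hT₀pos : 0 < T₀ := by
    rcases hT₀0.lt_or_eq with h | h
    · exact h
    · exfalso
      apply hne
      intro r
      have hrS : r ∈ closure S := by
        rw [Metric.mem_closure_iff]
        intro ε hε
        obtain ⟨t, htmem, htlt⟩ := exists_lt_of_csInf_lt hne'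
          (show sInf (S ∩ Ioi 0) < ε by rw [← hT₀def, ← h]; exact hε)
        refine ⟨(⌊r / t⌋ : ℝ) * t, hSint t htmem.1 ⌊r / t⌋, ?_⟩
        rw [Real.dist_eq, abs_of_nonneg (Int.sub_floor_div_mul_nonneg r htmem.2)]
        exact lt_trans (Int.sub_floor_div_mul_lt r htmem.2) htlt
      rw [hSclosed.closure_eq] at hrS
      exact hrS
  have hT₀S : T₀ ∈ S := by
    have h1 : T₀ ∈ closure (S ∩ Ioi 0) := csInf_mem_closure hne' hbdd
    have h2 : closure (S ∩ Ioi 0) ⊆ closure S := closure_mono inter_subset_left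
    rw [hSclosed.closure_eq] at h2
    exact h2 h1
  refine ⟨T₀, hT₀pos, fun t => ⟨fun htS => ?_, fun ⟨k, hk⟩ => by
    rw [hk]; exact flow_period_int hφ hT₀S k⟩⟩
  refine ⟨⌊t / T₀⌋, ?_⟩
  by_contra hne2
  have hr0 : 0 ≤ t - (⌊t / T₀⌋ : ℝ) * T₀ := Int.sub_floor_div_mul_nonneg t hT₀pos
  have hrlt : t - (⌊t / T₀⌋ : ℝ) * T₀ < T₀ := Int.sub_floor_div_mul_lt t hT₀pos
  have hrpos : 0 < t - (⌊t / T₀⌋ : ℝ) * T₀ := by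
    rcases hr0.lt_or_eq with h | h
    · exact h
    · exact absurd (by linarith : t = (⌊t / T₀⌋ : ℝ) * T₀) hne2
  have hrS : t - (⌊t / T₀⌋ : ℝ) * T₀ ∈ S ∩ Ioi 0 := by
    constructor
    · show φ (t - (⌊t / T₀⌋ : ℝ) * T₀) p = p
      rw [flow_sub_period hφ (flow_period_int hφ hT₀S) t ⌊t / T₀⌋]
      exact htS
    · exact hrpos
  have := csInf_le hbdd hrS
  rw [← hT₀def] at this
  linarith

/-- Step 2: the commuting flow acts as a linear-time rotation on each periodic orbit. -/
lemma per_lin (hφ : IsFlow φ) (hψ : IsFlow ψ) (hcomm : FlowsCommute φ ψ)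
    (h4 : FinitelyManyShortPeriodicOrbits φ) {p : M} (hp : IsPeriodicPoint φ p) :
    ∃ c : ℝ, ∀ u : ℝ, ψ u p = φ (c * u) p := by
  classical
  have habs_sub : ∀ a b : ℝ, |a - b| ≤ |a| + |b| := by
    intro a b
    calc |a - b| = |a + -b| := by rw [sub_eq_add_neg]
      _ ≤ |a| + |(-b)| := abs_add_le _ _
      _ = |a| + |b| := by rw [abs_neg]
  have H : ∀ u : ℝ, ∃ t : ℝ, ψ u p = φ t p := by
    intro u
    obtain ⟨t, ht⟩ := psi_mem_orbit hφ hψ hcomm h4 hp u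
    exact ⟨t, ht.symm⟩
  obtain ⟨T₀, hT₀pos, hT₀⟩ := exists_minimal_period hφ hp
  have hstab : ∀ k : ℤ, φ ((k : ℝ) * T₀) p = p := fun k => (hT₀ _).mpr ⟨k, rfl⟩
  have dk : ∀ a b : ℝ, φ a p = φ b p → ∃ k : ℤ, a - b = (k : ℝ) * T₀ := by
    intro a b hab
    have h1 : φ (-b + a) p = φ (-b + b) p := by rw [hφ.2.2, hφ.2.2, hab]
    rw [neg_add_cancel, hφ.2.1] at h1
    obtain ⟨k, hk⟩ := (hT₀ _).mp h1
    exact ⟨k, by linarith⟩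
  have small_eq : ∀ a b : ℝ, φ a p = φ b p → |a - b| < T₀ → a = b := by
    intro a b hab habs
    obtain ⟨k, hk⟩ := dk a b hab
    have hk0 : k = 0 := by
      by_contra h
      have h1 : (1 : ℤ) ≤ |k| := Int.one_le_abs h
      have h1' : (1 : ℝ) ≤ |(k : ℝ)| := by exact_mod_cast h1
      rw [hk, abs_mul, abs_of_pos hT₀pos] at habs
      nlinarith
    rw [hk0] at hk
    push_cast at hk
    linarith
  -- inverse continuity near p
  set B : Set M := (fun t => φ t p) '' (Icc (-(T₀/2)) (T₀/2) ∩ {t : ℝ | T₀/8 ≤ |t|}) with hBdef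
  have hBcpt : IsCompact B := by
    apply IsCompact.image _ (flow_cont_t hφ p)
    exact isCompact_Icc.inter_right (isClosed_le continuous_const continuous_abs)
  have hBne : B.Nonempty :=
    ⟨φ (T₀/4) p, ⟨T₀/4, ⟨⟨by linarith, by linarith⟩, by
      rw [mem_setOf_eq, abs_of_pos (by linarith)]; linarith⟩, rfl⟩⟩
  have hpB : p ∉ B := by
    rintro ⟨t, ⟨⟨ht1, ht2⟩, ht3⟩, hteq⟩
    have h1 : φ t p = φ 0 p := by rw [hφ.2.1]; exact hteq
    have h2 : t = 0 := by
      apply small_eq t 0 h1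
      rw [sub_zero, abs_lt]
      constructor <;> linarith
    rw [mem_setOf_eq, h2, abs_zero] at ht3
    linarith
  set r := infDist p B with hrdef
  have hr0 : 0 < r := by
    rcases (infDist_nonneg (s := B) (x := p)).lt_or_eq with h | h
    · exact h
    · exfalso
      have hmem : p ∈ closure B := (mem_closure_iff_infDist_zero hBne).mpr h.symm
      rw [hBcpt.isClosed.closure_eq] at hmem
      exact hpB hmem
  have hinv : ∀ t : ℝ, dist (φ t p) p < r → ∃ k : ℤ, |t - (k : ℝ) * T₀| < T₀/8 := by
    intro t hdist
    set k := ⌊t / T₀ + 1/2⌋ with hkdef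
    have hTne : T₀ ≠ 0 := ne_of_gt hT₀pos
    have hcanc : t / T₀ * T₀ = t := div_mul_cancel₀ t hTne
    have hk1 : (k : ℝ) ≤ t / T₀ + 1/2 := Int.floor_le _
    have hk2 : t / T₀ + 1/2 < (k : ℝ) + 1 := Int.lt_floor_add_one _
    have m1 := mul_le_mul_of_nonneg_right hk1 hT₀pos.le
    have m3 := mul_lt_mul_of_pos_right hk2 hT₀pos
    have m2 : (t / T₀ + 1/2) * T₀ = t + T₀/2 := by field_simp
    have hb1 : -(T₀/2) ≤ t - (k : ℝ) * T₀ := by nlinarith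
    have hb2 : t - (k : ℝ) * T₀ ≤ T₀/2 := by nlinarith
    have ht'eq : φ (t - (k : ℝ) * T₀) p = φ t p := flow_sub_period hφ hstab t k
    refine ⟨k, ?_⟩
    by_contra hcon
    push_neg at hcon
    have hmemB : φ (t - (k : ℝ) * T₀) p ∈ B := ⟨t - (k : ℝ) * T₀, ⟨⟨hb1, hb2⟩, hcon⟩, rfl⟩
    have h5 : r ≤ dist p (φ (t - (k : ℝ) * T₀) p) := infDist_le_dist_of_mem hmemB
    rw [dist_comm, ht'eq] at h5
    linarith
  -- small-time representative
  have hψct : ContinuousAt (fun u : ℝ => ψ u p) 0 := (flow_cont_t hψ p).continuousAt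
  rw [Metric.continuousAt_iff] at hψct
  obtain ⟨δ, hδ0, hδ⟩ := hψct r hr0
  obtain ⟨δ', hδ'0, hδ'lt⟩ : ∃ δ' : ℝ, 0 < δ' ∧ δ' < δ := ⟨δ/2, by linarith, by linarith⟩
  set Q : ℝ → ℝ → Prop := fun u t => ψ u p = φ t p ∧ |t| ≤ T₀/8 with hQdef
  have hexQ : ∀ u : ℝ, |u| ≤ δ' → ∃ t, Q u t := by
    intro u hu
    obtain ⟨t, ht⟩ := H u
    have h1 : dist (ψ u p) (ψ 0 p) < r := by
      apply hδ
      rw [Real.dist_eq, sub_zero]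
      calc |u| ≤ δ' := hu
        _ < δ := hδ'lt
    rw [hψ.2.1, ht] at h1
    obtain ⟨k, hk⟩ := hinv t h1
    refine ⟨t - (k : ℝ) * T₀, ?_, hk.le⟩
    rw [flow_sub_period hφ hstab]
    exact ht
  have huniq : ∀ u t t', Q u t → Q u t' → t = t' := by
    rintro u t t' ⟨h1, h2⟩ ⟨h3, h4'⟩
    apply small_eq t t' (by rw [← h1, ← h3])
    have h5 := habs_sub t t'
    linarith
  set g : ℝ → ℝ := fun u => if h : ∃ t, Q u t then h.choose else 0 with hgdef
  have hgQ : ∀ u : ℝ, |u| ≤ δ' → Q u (g u) := by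
    intro u hu
    have h := hexQ u hu
    simp only [hgdef, dif_pos h]
    exact h.choose_spec
  have hg0 : g 0 = 0 := by
    have h0 : Q 0 0 := ⟨by rw [hψ.2.1, hφ.2.1], by rw [abs_zero]; linarith⟩
    exact huniq 0 _ _ (hgQ 0 (by rw [abs_zero]; linarith)) h0
  have hgadd : ∀ x y : ℝ, |x| ≤ δ' → |y| ≤ δ' → |x + y| ≤ δ' → g (x + y) = g x + g y := by
    intro x y hx hy hxy
    have Qx := hgQ x hx
    have Qy := hgQ y hy
    have Qxy := hgQ _ hxy
    have hcomp : ψ (x + y) p = φ (g x + g y) p := by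
      calc ψ (x + y) p = ψ x (ψ y p) := hψ.2.2 x y p
        _ = ψ x (φ (g y) p) := by rw [Qy.1]
        _ = φ (g y) (ψ x p) := hcomm x (g y) p
        _ = φ (g y) (φ (g x) p) := by rw [Qx.1]
        _ = φ (g y + g x) p := (hφ.2.2 _ _ _).symm
        _ = φ (g x + g y) p := by rw [add_comm (g y)]
    have heq : φ (g (x + y)) p = φ (g x + g y) p := by rw [← Qxy.1, hcomp]
    obtain ⟨k, hk⟩ := dk _ _ heq
    have hk0 : k = 0 := by
      by_contra h
      have h1 : (1 : ℤ) ≤ |k| := Int.one_le_abs h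
      have h1' : (1 : ℝ) ≤ |(k : ℝ)| := by exact_mod_cast h1
      have hs : |g x + g y| ≤ |g x| + |g y| := abs_add_le _ _
      have h2 : |g (x + y) - (g x + g y)| ≤ 3 * (T₀/8) := by
        have h3 := habs_sub (g (x + y)) (g x + g y)
        have := Qxy.2
        have := Qx.2
        have := Qy.2
        linarith
      rw [hk, abs_mul, abs_of_pos hT₀pos] at h2
      nlinarith
    rw [hk0] at hk
    push_cast at hk
    linarith
  have hgnat : ∀ (k : ℕ) (x : ℝ), |x| ≤ δ' → |(k : ℝ) * x| ≤ δ' →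
      g ((k : ℝ) * x) = (k : ℝ) * g x := by
    intro k
    induction k with
    | zero => intro x hx hkx; simp [hg0]
    | succ n ih =>
      intro x hx hkx
      have hn1x : |((n : ℝ) + 1) * x| ≤ δ' := by push_cast at hkx; exact hkx
      have hn : |(n : ℝ) * x| ≤ δ' := by
        refine le_trans ?_ hn1x
        rw [abs_mul, abs_mul]
        apply mul_le_mul_of_nonneg_right _ (abs_nonneg x)
        rw [abs_of_nonneg (by positivity : (0:ℝ) ≤ (n : ℝ)),
          abs_of_nonneg (by positivity : (0:ℝ) ≤ (n : ℝ) + 1)]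
        linarith
      have hsum : |(n : ℝ) * x + x| ≤ δ' := by
        rw [show (n : ℝ) * x + x = ((n : ℝ) + 1) * x by ring]
        exact hn1x
      have step : g ((n : ℝ) * x + x) = g ((n : ℝ) * x) + g x := hgadd _ _ hn hx hsum
      push_cast
      rw [show ((n : ℝ) + 1) * x = (n : ℝ) * x + x by ring, step, ih x hx hn]
      ring
  have hglim : ∀ (u : ℕ → ℝ) (v : ℝ), (∀ n, |u n| ≤ δ') → |v| ≤ δ' →
      Tendsto u atTop (𝓝 v) → Tendsto (fun n => g (u n)) atTop (𝓝 (g v)) := by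
    intro u v hu hv huv
    apply tendsto_of_subseq_tendsto
    intro ns hns
    obtain ⟨a, ha, σ, hσ, hlim⟩ := (isCompact_Icc (a := -(T₀/8)) (b := T₀/8)).tendsto_subseq
      (x := fun n => g (u (ns n)))
      (fun n => Set.mem_Icc.mpr (abs_le.mp (hgQ _ (hu (ns n))).2))
    refine ⟨σ, ?_⟩
    have hseq : ∀ n : ℕ, ψ (u (ns (σ n))) p = φ (g (u (ns (σ n)))) p :=
      fun n => (hgQ _ (hu _)).1
    have h1 : Tendsto (fun n => φ (g (u (ns (σ n)))) p) atTop (𝓝 (φ a p)) :=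
      ((flow_cont_t hφ p).tendsto a).comp hlim
    have h2 : Tendsto (fun n => ψ (u (ns (σ n))) p) atTop (𝓝 (ψ v p)) :=
      ((flow_cont_t hψ p).tendsto v).comp (huv.comp (hns.comp hσ.tendsto_atTop))
    have h2' : Tendsto (fun n => φ (g (u (ns (σ n)))) p) atTop (𝓝 (ψ v p)) :=
      h2.congr hseq
    have h3 : ψ v p = φ a p := tendsto_nhds_unique h2' h1
    have hQa : Q v a := ⟨h3, abs_le.mpr (Set.mem_Icc.mp ha)⟩
    have ha2 : a = g v := huniq v a (g v) hQa (hgQ v hv)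
    rw [ha2] at hlim
    exact hlim
  set c := g δ' / δ' with hcdef
  have hlinpos : ∀ u : ℝ, 0 ≤ u → u ≤ δ' → g u = c * u := by
    intro u hu0 huδ
    set w : ℕ → ℝ := fun n => (⌊((n : ℝ) + 1) * u / δ'⌋₊ : ℝ) * (δ' / ((n : ℝ) + 1)) with hwdef
    have hw_eval : ∀ n : ℕ, w n = (⌊((n : ℝ) + 1) * u / δ'⌋₊ : ℝ) * (δ' / ((n : ℝ) + 1)) :=
      fun n => rfl
    have hδ'ne : δ' ≠ 0 := ne_of_gt hδ'0
    have hn1ne : ∀ n : ℕ, ((n : ℝ) + 1) ≠ 0 := fun n => by positivity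
    have hAu : ∀ n : ℕ, (((n : ℝ) + 1) * u / δ') * (δ' / ((n : ℝ) + 1)) = u := by
      intro n
      field_simp
    have hfloor_le : ∀ n : ℕ, (⌊((n : ℝ) + 1) * u / δ'⌋₊ : ℝ) ≤ ((n : ℝ) + 1) * u / δ' :=
      fun n => Nat.floor_le (by positivity)
    have hfloor_gt : ∀ n : ℕ, ((n : ℝ) + 1) * u / δ' - 1 < (⌊((n : ℝ) + 1) * u / δ'⌋₊ : ℝ) :=
      fun n => by have := Nat.lt_floor_add_one (((n : ℝ) + 1) * u / δ'); linarith
    have hw_nonneg : ∀ n : ℕ, 0 ≤ w n := fun n => by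
      rw [hw_eval n]; positivity
    have hw_le : ∀ n : ℕ, w n ≤ u := by
      intro n
      rw [hw_eval n]
      calc (⌊((n : ℝ) + 1) * u / δ'⌋₊ : ℝ) * (δ' / ((n : ℝ) + 1))
          ≤ (((n : ℝ) + 1) * u / δ') * (δ' / ((n : ℝ) + 1)) :=
            mul_le_mul_of_nonneg_right (hfloor_le n) (by positivity)
        _ = u := hAu n
    have hw_ge : ∀ n : ℕ, u - δ' / ((n : ℝ) + 1) < w n := by
      intro n
      have h2 : (((n : ℝ) + 1) * u / δ' - 1) * (δ' / ((n : ℝ) + 1)) < w n := by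
        rw [hw_eval n]
        exact mul_lt_mul_of_pos_right (hfloor_gt n) (by positivity)
      have h3 : (((n : ℝ) + 1) * u / δ' - 1) * (δ' / ((n : ℝ) + 1)) = u - δ' / ((n : ℝ) + 1) := by
        rw [sub_mul, one_mul, hAu n]
      linarith
    have hwδ : ∀ n : ℕ, |w n| ≤ δ' := fun n => by
      rw [abs_of_nonneg (hw_nonneg n)]
      exact (hw_le n).trans huδ
    have hgw : ∀ n : ℕ, g (w n) = c * w n := by
      intro n
      have hδn : |δ' / ((n : ℝ) + 1)| ≤ δ' := by
        rw [abs_of_pos (by positivity), div_le_iff₀ (by positivity : (0:ℝ) < (n : ℝ) + 1)]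
        nlinarith [hδ'0, Nat.cast_nonneg (α := ℝ) n]
      have e1 : g (w n) = (⌊((n : ℝ) + 1) * u / δ'⌋₊ : ℝ) * g (δ' / ((n : ℝ) + 1)) := by
        rw [hw_eval n]
        exact hgnat _ _ hδn (by rw [← hw_eval n]; exact hwδ n)
      have hcancel : ((n : ℝ) + 1) * (δ' / ((n : ℝ) + 1)) = δ' := by
        field_simp
      have e2 : g δ' = ((n : ℝ) + 1) * g (δ' / ((n : ℝ) + 1)) := by
        have h6 := hgnat (n + 1) (δ' / ((n : ℝ) + 1)) hδn
          (by push_cast; rw [hcancel, abs_of_pos hδ'0])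
        push_cast at h6
        rw [hcancel] at h6
        exact h6
      have e3 : g (δ' / ((n : ℝ) + 1)) = g δ' / ((n : ℝ) + 1) := by
        rw [e2, mul_div_cancel_left₀ _ (hn1ne n)]
      rw [e1, e3, hw_eval n, hcdef]
      field_simp
    have hwlim : Tendsto w atTop (𝓝 u) := by
      rw [tendsto_iff_dist_tendsto_zero]
      apply squeeze_zero (fun n => dist_nonneg) (g := fun n : ℕ => δ' * (1 / ((n : ℝ) + 1)))
      · intro n
        rw [Real.dist_eq, abs_of_nonpos (by linarith [hw_le n])]
        have := hw_ge n
        have h7 : δ' * (1 / ((n : ℝ) + 1)) = δ' / ((n : ℝ) + 1) := by ring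
        linarith
      · simpa using tendsto_one_div_add_atTop_nhds_zero_nat.const_mul δ'
    have hglim1 : Tendsto (fun n => g (w n)) atTop (𝓝 (g u)) :=
      hglim w u hwδ (by rw [abs_of_nonneg hu0]; exact huδ) hwlim
    have hglim2 : Tendsto (fun n => g (w n)) atTop (𝓝 (c * u)) := by
      have h8 : Tendsto (fun n => c * w n) atTop (𝓝 (c * u)) := hwlim.const_mul c
      exact h8.congr fun n => (hgw n).symm
    exact tendsto_nhds_unique hglim1 hglim2
  have hlin : ∀ u : ℝ, |u| ≤ δ' → g u = c * u := by
    intro u hu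
    rcases le_or_gt 0 u with h | h
    · exact hlinpos u h (by rwa [abs_of_nonneg h] at hu)
    · have hneg : 0 ≤ -u := by linarith
      have huδ : -u ≤ δ' := by rwa [abs_of_neg h] at hu
      have h1 : g (-u) = c * (-u) := hlinpos (-u) hneg huδ
      have h2 : g (u + -u) = g u + g (-u) := hgadd u (-u) hu (by rwa [abs_neg])
        (by rw [add_neg_cancel, abs_zero]; linarith)
      rw [add_neg_cancel, hg0, h1] at h2
      have h9 : c * (-u) = -(c * u) := by ring
      rw [h9] at h2
      linarith
  refine ⟨c, fun u => ?_⟩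
  obtain ⟨n, hn⟩ := exists_nat_ge (|u| / δ')
  have hm0 : (0 : ℝ) < (n : ℝ) + 1 := by positivity
  have hmu : |u / ((n : ℝ) + 1)| ≤ δ' := by
    rw [abs_div, abs_of_pos hm0, div_le_iff₀ hm0]
    rw [div_le_iff₀ hδ'0] at hn
    nlinarith [hδ'0.le]
  set w := u / ((n : ℝ) + 1) with hwdef
  have hbase : ψ w p = φ (c * w) p := by
    have h10 := (hgQ w hmu).1
    rwa [hlin w hmu] at h10
  have hiter : ∀ j : ℕ, ψ ((j : ℝ) * w) p = φ (c * ((j : ℝ) * w)) p := by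
    intro j
    induction j with
    | zero => simp [hψ.2.1, hφ.2.1]
    | succ i ih =>
      push_cast
      rw [show ((i : ℝ) + 1) * w = w + (i : ℝ) * w by ring, hψ.2.2, ih, hcomm, hbase,
        ← hφ.2.2]
      congr 1
      ring
  have h11 := hiter (n + 1)
  have h12 : ((n : ℝ) + 1) * w = u := by rw [hwdef]; field_simp
  push_cast at h11
  rw [h12] at h11
  exact h11

end TheoremB

/-- Under the hypotheses of Theorem B, every continuous flow `(Y_s)_s` commuting with
`(X_t)_t` preserves each orbit of `(X_t)_t`: `Y_s(x)` lies on the `(X_t)_t`-orbit of `x`. -/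
theorem commuting_flow_preserves_orbits
    [CompactSpace M] [ConnectedSpace M]
    (φ : ℝ → M → M) (hφ : IsFlow φ)
    (h1 : {p : M | IsEquilibrium φ p}.Finite)
    (h2 : Dense {p : M | IsPeriodicPoint φ p})
    (h3 : IsTransitiveFlow φ)
    (h4 : FinitelyManyShortPeriodicOrbits φ)
    (ψ : ℝ → M → M) (hψ : IsFlow ψ) (hcomm : FlowsCommute φ ψ) :
    ∀ (x : M) (s : ℝ), ψ s x ∈ flowOrbit φ x := by
  classical
  intro x s
  obtain ⟨x₀, hx₀⟩ := h3
  by_cases hE : IsEquilibrium φ x₀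
  · -- the dense forward orbit is a single point, so M is a single point
    have hsub : {y : M | ∃ t : ℝ, 0 ≤ t ∧ φ t x₀ = y} ⊆ {x₀} := by
      rintro y ⟨t, -, rfl⟩
      simp [hE t]
    have hd : Dense ({x₀} : Set M) := hx₀.mono hsub
    have hall : ∀ y : M, y = x₀ := by
      intro y
      have h1 : closure ({x₀} : Set M) = univ := hd.closure_eq
      rw [closure_singleton] at h1
      have h2 : y ∈ ({x₀} : Set M) := h1 ▸ mem_univ y
      simpa using h2
    refine ⟨0, ?_⟩
    show φ 0 x = ψ s x
    rw [hφ.2.1, hall (ψ s x), hall x]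
  · -- main case: bounded rotation speeds near x₀
    have hC : ∃ C > 0, ∀ ε > 0, ∃ p c, IsPeriodicPoint φ p ∧ dist p x₀ < ε ∧
        (∀ u : ℝ, ψ u p = φ (c * u) p) ∧ |c| ≤ C := by
      by_contra hcon
      push_neg at hcon
      apply hE
      intro a
      refine eq_of_forall_dist_le fun η hη => ?_
      have hcψ : ContinuousAt (fun q : ℝ × M => ψ q.1 q.2) (0, x₀) := hψ.1.continuousAt
      rw [Metric.continuousAt_iff] at hcψ
      obtain ⟨δ₁, hδ₁0, hδ₁⟩ := hcψ (η/2) (by linarith)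
      have hcφ : ContinuousAt (φ a) x₀ := (flow_cont_x hφ a).continuousAt
      rw [Metric.continuousAt_iff] at hcφ
      obtain ⟨δ₂, hδ₂0, hδ₂⟩ := hcφ (η/2) (by linarith)
      obtain ⟨ε, hε0, hεall⟩ := hcon (|a|/δ₁ + 1) (by positivity)
      obtain ⟨p, hpper, hpx⟩ := h2.exists_dist_lt x₀
        (show (0:ℝ) < min ε (min δ₁ δ₂) by positivity)
      obtain ⟨c, hc⟩ := per_lin hφ hψ hcomm h4 hpper
      have hpx' : dist p x₀ < min ε (min δ₁ δ₂) := by rwa [dist_comm] at hpx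
      have hcbig : |a|/δ₁ + 1 < |c| := hεall p c hpper
        (lt_of_lt_of_le hpx' (min_le_left _ _)) hc
      have habs0 : (0:ℝ) ≤ |a|/δ₁ := by positivity
      have hcpos : (0:ℝ) < |c| := by linarith
      have hc0 : c ≠ 0 := fun h => by rw [h, abs_zero] at hcpos; exact lt_irrefl _ hcpos
      have hsmall : |a / c| < δ₁ := by
        rw [abs_div, div_lt_iff₀ hcpos]
        have hd1 : |a|/δ₁ * δ₁ = |a| := div_mul_cancel₀ _ (ne_of_gt hδ₁0)
        nlinarith
      have key : φ a p = ψ (a / c) p := by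
        rw [hc (a / c), mul_div_cancel₀ a hc0]
      have hpδ₁ : dist p x₀ < δ₁ :=
        lt_of_lt_of_le hpx' (le_trans (min_le_right _ _) (min_le_left _ _))
      have hpδ₂ : dist p x₀ < δ₂ :=
        lt_of_lt_of_le hpx' (le_trans (min_le_right _ _) (min_le_right _ _))
      have e1 : dist (φ a p) (φ a x₀) < η/2 := hδ₂ hpδ₂
      have e2 : dist (ψ (a/c) p) x₀ < η/2 := by
        have hq : dist ((a/c, p) : ℝ × M) ((0 : ℝ), x₀) < δ₁ := by
          rw [Prod.dist_eq]
          apply max_lt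
          · rw [Real.dist_eq, sub_zero]
            exact hsmall
          · exact hpδ₁
        have h3 := hδ₁ hq
        dsimp only at h3
        rwa [hψ.2.1] at h3
      calc dist (φ a x₀) x₀ ≤ dist (φ a x₀) (φ a p) + dist (φ a p) x₀ := dist_triangle _ _ _
        _ = dist (φ a p) (φ a x₀) + dist (ψ (a/c) p) x₀ := by
            rw [dist_comm (φ a x₀), key]
        _ ≤ η := by linarith
    obtain ⟨C, hC0, hCall⟩ := hC
    choose pf cf hper hdist hlin hbound using fun n : ℕ =>
      hCall (1 / ((n : ℝ) + 1)) (by positivity)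
    have hp_to : Tendsto pf atTop (𝓝 x₀) := by
      rw [tendsto_iff_dist_tendsto_zero]
      apply squeeze_zero (fun n => dist_nonneg) (fun n => (hdist n).le)
      exact tendsto_one_div_add_atTop_nhds_zero_nat
    have ht_mem : ∀ n, cf n * s ∈ Icc (-(C * |s|)) (C * |s|) := by
      intro n
      rw [Set.mem_Icc, ← abs_le, abs_mul]
      exact mul_le_mul_of_nonneg_right (hbound n) (abs_nonneg s)
    obtain ⟨a, -, σ, hσ, hta⟩ := isCompact_Icc.tendsto_subseq ht_mem
    have hps : Tendsto (fun n => pf (σ n)) atTop (𝓝 x₀) := hp_to.comp hσ.tendsto_atTop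
    have h1 : Tendsto (fun n => ψ s (pf (σ n))) atTop (𝓝 (ψ s x₀)) :=
      ((flow_cont_x hψ s).tendsto x₀).comp hps
    have h2 : Tendsto (fun n => φ (cf (σ n) * s) (pf (σ n))) atTop (𝓝 (φ a x₀)) := by
      have hpair : Tendsto (fun n => ((cf (σ n) * s, pf (σ n)) : ℝ × M)) atTop
          (𝓝 ((a, x₀) : ℝ × M)) := hta.prodMk_nhds hps
      exact (hφ.1.tendsto ((a, x₀) : ℝ × M)).comp hpair
    have h1' : Tendsto (fun n => φ (cf (σ n) * s) (pf (σ n))) atTop (𝓝 (ψ s x₀)) :=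
      h1.congr fun n => hlin (σ n) s
    have hax : ψ s x₀ = φ a x₀ := tendsto_nhds_unique h1' h2
    have hfun : ψ s = φ a := by
      apply Continuous.ext_on hx₀ (flow_cont_x hψ s) (flow_cont_x hφ a)
      rintro y ⟨t, -, rfl⟩
      calc ψ s (φ t x₀) = φ t (ψ s x₀) := hcomm s t x₀
        _ = φ t (φ a x₀) := by rw [hax]
        _ = φ (t + a) x₀ := (hφ.2.2 t a x₀).symm
        _ = φ (a + t) x₀ := by rw [add_comm]
        _ = φ a (φ t x₀) := hφ.2.2 a t x₀
    refine ⟨a, ?_⟩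
    show φ a x = ψ s x
    rw [hfun]
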